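/- Let Λ_0 = +∞ and Λ_1 > … > Λ_n > 0 with all Λ_p ∈ (1/2)ℤ and Λ_p − Λ_{p+1} ∈ ℤ_{>0}. For 1 ≤ i ≤ n define K_i as the set of tuples λ = (λ_1, …, λ_n) with λ_p ∈ (1/2)ℤ such that Λ_{p-1} − n + p − 1/2 ≥ λ_p ≥ Λ_p − n + p + 1/2 for 1 ≤ p ≤ i−1, Λ_p − n + p − 1/2 ≥ λ_p ≥ Λ_{p+1} − n + p + 1/2 for i ≤ p ≤ n−1, and Λ_n − 1/2 ≥ |λ_n|. Also define K(π_0) by Λ_{p-1} − n + p − 1/2 ≥ λ_p ≥ Λ_p − n + p + 1/2 for 1 ≤ p ≤ n, and K(π_1) by the same for p ≤ n−1 together with −Λ_n − 1/2 ≥ λ_n ≥ −Λ_{n-1} + 1/2. Then the sets K_1, …, K_n, K(π_0), K(π_1) are pairwise disjoint. -/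
import Mathlib


/-- The `K`-spectrum of `π̄_{0,i}` for `Spin(2n,1)` (Theorem 2.6(2)); `Λ_0 = ∞` is
encoded by omitting the upper bound at `p = 1`. Entries are half-integers. -/
def Kspec (n i : ℕ) (Λ : ℕ → ℝ) : Set (ℕ → ℝ) :=
  {lm | (∀ p, 1 ≤ p → p ≤ n → ∃ z : ℤ, 2 * lm p = z) ∧
    (∀ p, 2 ≤ p → p ≤ i - 1 → Λ (p-1) - n + p - 1/2 ≥ lm p) ∧
    (∀ p, 1 ≤ p → p ≤ i - 1 → lm p ≥ Λ p - n + p + 1/2) ∧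
    (∀ p, i ≤ p → p ≤ n - 1 →
      Λ p - n + p - 1/2 ≥ lm p ∧ lm p ≥ Λ (p+1) - n + p + 1/2) ∧
    Λ n - 1/2 ≥ |lm n|}

/-- The `K`-spectrum of the discrete series `π_0` (Theorem 2.6(1)). -/
def KspecDS0 (n : ℕ) (Λ : ℕ → ℝ) : Set (ℕ → ℝ) :=
  {lm | (∀ p, 1 ≤ p → p ≤ n → ∃ z : ℤ, 2 * lm p = z) ∧
    (∀ p, 2 ≤ p → p ≤ n → Λ (p-1) - n + p - 1/2 ≥ lm p) ∧
    (∀ p, 1 ≤ p → p ≤ n → lm p ≥ Λ p - n + p + 1/2)}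

/-- The `K`-spectrum of the discrete series `π_1` (Theorem 2.6(1)). -/
def KspecDS1 (n : ℕ) (Λ : ℕ → ℝ) : Set (ℕ → ℝ) :=
  {lm | (∀ p, 1 ≤ p → p ≤ n → ∃ z : ℤ, 2 * lm p = z) ∧
    (∀ p, 2 ≤ p → p ≤ n - 1 → Λ (p-1) - n + p - 1/2 ≥ lm p) ∧
    (∀ p, 1 ≤ p → p ≤ n - 1 → lm p ≥ Λ p - n + p + 1/2) ∧
    -Λ n - 1/2 ≥ lm n ∧ lm n ≥ -Λ (n-1) + 1/2}

/-- The `K`-spectra `K_1, …, K_n, K(π_0), K(π_1)` are pairwise disjoint. -/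
theorem Kspectra_pairwise_disjoint (n : ℕ) (hn : 2 ≤ n) (Λ : ℕ → ℝ)
    (hhalf : ∀ p, 1 ≤ p → p ≤ n → ∃ z : ℤ, 2 * Λ p = z)
    (hgap : ∀ p, 1 ≤ p → p ≤ n - 1 → ∃ z : ℤ, Λ p - Λ (p+1) = z ∧ (0:ℝ) < z)
    (hpos : 0 < Λ n) :
    (∀ i j, 1 ≤ i → i ≤ n → 1 ≤ j → j ≤ n → i ≠ j →
        Kspec n i Λ ∩ Kspec n j Λ = ∅) ∧
    (∀ i, 1 ≤ i → i ≤ n →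
        Kspec n i Λ ∩ KspecDS0 n Λ = ∅ ∧ Kspec n i Λ ∩ KspecDS1 n Λ = ∅) ∧
    KspecDS0 n Λ ∩ KspecDS1 n Λ = ∅ := by
  have key : ∀ i j, 1 ≤ i → i ≤ n → 1 ≤ j → j ≤ n → i < j →
      Kspec n i Λ ∩ Kspec n j Λ = ∅ := by
    intro i j hi hin hj hjn hij
    ext lm
    simp only [Set.mem_inter_iff, Set.mem_empty_iff_false, iff_false, not_and]
    rintro ⟨_, _, _, hKi, _⟩ ⟨_, _, hKj, _, _⟩
    have h1 := (hKi i le_rfl (by omega)).1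
    have h2 := hKj i hi (by omega)
    linarith
  refine ⟨fun i j hi hin hj hjn hne => ?_, fun i hi hin => ⟨?_, ?_⟩, ?_⟩
  · rcases Nat.lt_or_ge i j with h | h
    · exact key i j hi hin hj hjn h
    · rw [Set.inter_comm]; exact key j i hj hjn hi hin (by omega)
  · ext lm
    simp only [Set.mem_inter_iff, Set.mem_empty_iff_false, iff_false, not_and]
    rintro ⟨_, _, _, hKi, hKn⟩ ⟨_, _, hDS⟩
    rcases Nat.lt_or_ge i n with h | h
    · have h1 := (hKi i le_rfl (by omega)).1
      have h2 := hDS i hi (by omega)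
      linarith
    · have h2 := hDS n (by omega) le_rfl
      have h3 := (abs_le.mp (by linarith : |lm n| ≤ Λ n - 1/2)).2
      linarith
  · ext lm
    simp only [Set.mem_inter_iff, Set.mem_empty_iff_false, iff_false, not_and]
    rintro ⟨_, _, _, _, hKn⟩ ⟨_, _, _, hub, _⟩
    have h3 := (abs_le.mp (by linarith : |lm n| ≤ Λ n - 1/2)).1
    linarith
  · ext lm
    simp only [Set.mem_inter_iff, Set.mem_empty_iff_false, iff_false, not_and]
    rintro ⟨_, _, hlb⟩ ⟨_, _, _, hub, _⟩
    have h1 := hlb n (by omega) le_rfl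
    linarith
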